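/- Let h be a nonzero integer and p an odd prime not dividing h. Then for positive integers n, the random variable product X_p Y_p Z_p, where X_p(n) = d_k(p^{v_p(n+h)}), Y_p(n) = d_l(p^{v_p(n)}), Z_p(n) = d_m(p^{v_p(n-h)}), has natural-density expectation E(X_p Y_p Z_p) = (1 - 1/p)^{1-k} + (1 - 1/p)^{1-l} + (1 - 1/p)^{1-m} - 2. -/

import Mathlib

/-- `D k n` is the number of `k`-tuples of positive integers with product `n`. -/
def D (k n : ℕ) : ℕ :=
  ((Fintype.piFinset fun _ : Fin k => Finset.Icc 1 n).filter fun f => ∏ i, f i = n).card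

open scoped Classical in
/-- `HasDensity A d` : the set `A` of positive integers has natural density `d`. -/
noncomputable def HasDensity (A : Set ℕ) (d : ℝ) : Prop :=
  Filter.Tendsto (fun x : ℕ => (((Finset.Icc 1 x).filter fun n => n ∈ A).card : ℝ) / x)
    Filter.atTop (nhds d)

/-- `HasExpectation F e` : each level set of `F` has a natural density, and
`∑ v, v · δ(F = v) = e`. -/
noncomputable def HasExpectation (F : ℕ → ℕ) (e : ℝ) : Prop :=
  ∃ δ : ℕ → ℝ, (∀ v : ℕ, HasDensity {n : ℕ | F n = v} (δ v)) ∧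
    HasSum (fun v : ℕ => (v : ℝ) * δ v) e


open Finset Filter
open scoped Classical

open scoped Classical in
noncomputable def dcount (A : Set ℕ) (x : ℕ) : ℕ :=
  ((Finset.Icc 1 x).filter fun n => n ∈ A).card

lemma hasDensity_iff {A : Set ℕ} {d : ℝ} :
    HasDensity A d ↔ Tendsto (fun x : ℕ => (dcount A x : ℝ) / x) atTop (nhds d) := Iff.rfl

lemma tendsto_div_of_close {f g : ℕ → ℝ} {d C : ℝ} (hC : ∀ x : ℕ, |g x - f x| ≤ C)
    (hf : Tendsto (fun x : ℕ => f x / x) atTop (nhds d)) :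
    Tendsto (fun x : ℕ => g x / x) atTop (nhds d) := by
  have h0 : Tendsto (fun x : ℕ => (g x - f x) / x) atTop (nhds 0) := by
    apply squeeze_zero_norm (fun x => ?_) (tendsto_const_div_atTop_nhds_zero_nat C)
    rcases Nat.eq_zero_or_pos x with hx | hx
    · subst hx
      simp only [Nat.cast_zero, div_zero, norm_zero]
      positivity
    · rw [norm_div, Real.norm_natCast]
      exact div_le_div_of_nonneg_right (hC x) (Nat.cast_nonneg x)
  have h := hf.add h0
  rw [add_zero] at h
  exact h.congr fun x => by ring

lemma hasDensity_of_count {A : Set ℕ} {q C : ℕ} (hq : 0 < q)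
    (hcnt : ∀ x : ℕ, x ≤ q * dcount A x + C ∧ q * dcount A x ≤ x + C) :
    HasDensity A (1 / q) := by
  rw [hasDensity_iff]
  have hq' : (0:ℝ) < q := by exact_mod_cast hq
  have hq1 : (1:ℝ) ≤ q := by exact_mod_cast hq
  have hC0 : (0:ℝ) ≤ C := Nat.cast_nonneg C
  apply tendsto_div_of_close (f := fun x : ℕ => (x : ℝ) / q) (C := C)
  · intro x
    obtain ⟨h1, h2⟩ := hcnt x
    have h1' : (x:ℝ) ≤ q * dcount A x + C := by exact_mod_cast h1
    have h2' : (q:ℝ) * dcount A x ≤ x + C := by exact_mod_cast h2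
    rw [abs_le]
    constructor
    · have : (x:ℝ)/q ≤ dcount A x + C := by
        rw [div_le_iff₀ hq']; nlinarith
      linarith
    · have : (dcount A x : ℝ) - C ≤ x / q := by
        rw [le_div_iff₀ hq']; nlinarith
      linarith
  · have heq : ∀ᶠ x : ℕ in atTop, ((x:ℝ)/q)/x = 1/q := by
      filter_upwards [eventually_ge_atTop 1] with x hx
      have hx0 : (x:ℝ) ≠ 0 := Nat.cast_ne_zero.mpr (by omega)
      field_simp
    rw [tendsto_congr' heq]
    exact tendsto_const_nhds

lemma hasDensity_congr {A B : Set ℕ} {d : ℝ} (N : ℕ)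
    (hAB : ∀ n, N ≤ n → (n ∈ A ↔ n ∈ B)) (hA : HasDensity A d) : HasDensity B d := by
  rw [hasDensity_iff] at hA ⊢
  apply tendsto_div_of_close (f := fun x => (dcount A x : ℝ)) (C := (N : ℝ)) _ hA
  intro x
  have key : ∀ (S T : Set ℕ), (∀ n, N ≤ n → n ∈ S → n ∈ T) →
      dcount S x ≤ dcount T x + N := by
    intro S T hST
    have hsub : (Finset.Icc 1 x).filter (fun n => n ∈ S) ⊆
        ((Finset.Icc 1 x).filter fun n => n ∈ T) ∪ Finset.Ico 0 N := by
      intro n hn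
      rw [Finset.mem_filter] at hn
      by_cases hN : N ≤ n
      · exact Finset.mem_union_left _ (Finset.mem_filter.mpr ⟨hn.1, hST n hN hn.2⟩)
      · exact Finset.mem_union_right _ (Finset.mem_Ico.mpr ⟨Nat.zero_le n, by omega⟩)
    calc dcount S x ≤ _ := Finset.card_le_card hsub
      _ ≤ dcount T x + N := by
          refine (Finset.card_union_le _ _).trans ?_
          simp [dcount]
  have h1 : dcount B x ≤ dcount A x + N := key B A fun n hn h => (hAB n hn).mpr h
  have h2 : dcount A x ≤ dcount B x + N := key A B fun n hn h => (hAB n hn).mp h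
  rw [abs_le]
  constructor
  · have : (dcount A x : ℝ) ≤ dcount B x + N := by exact_mod_cast h2
    linarith
  · have : (dcount B x : ℝ) ≤ dcount A x + N := by exact_mod_cast h1
    linarith

lemma hasDensity_union {A B : Set ℕ} {da db : ℝ} (hd : ∀ n, n ∈ A → n ∈ B → False)
    (hA : HasDensity A da) (hB : HasDensity B db) : HasDensity (A ∪ B) (da + db) := by
  rw [hasDensity_iff] at *
  have hkey : ∀ x, (dcount (A ∪ B) x : ℝ) = dcount A x + dcount B x := by
    intro x
    have hdisj : Disjoint ((Finset.Icc 1 x).filter fun n => n ∈ A)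
        ((Finset.Icc 1 x).filter fun n => n ∈ B) := by
      rw [Finset.disjoint_left]
      intro n hn hn'
      rw [Finset.mem_filter] at hn hn'
      exact hd n hn.2 hn'.2
    have hnat : dcount (A ∪ B) x = dcount A x + dcount B x := by
      unfold dcount
      rw [← Finset.card_union_of_disjoint hdisj]
      congr 1
      ext n
      simp only [Finset.mem_filter, Finset.mem_union, Set.mem_union]
      tauto
    rw [hnat]
    push_cast
    ring
  have h := hA.add hB
  exact h.congr fun x => by rw [← add_div, ← hkey x]

lemma hasDensity_sdiff {A B : Set ℕ} {da db : ℝ} (hBA : B ⊆ A)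
    (hA : HasDensity A da) (hB : HasDensity B db) : HasDensity (A \ B) (da - db) := by
  rw [hasDensity_iff] at *
  have hkey : ∀ x, (dcount (A \ B) x : ℝ) = dcount A x - dcount B x := by
    intro x
    have hsub : ((Finset.Icc 1 x).filter fun n => n ∈ B) ⊆
        ((Finset.Icc 1 x).filter fun n => n ∈ A) := by
      intro n hn
      rw [Finset.mem_filter] at hn ⊢
      exact ⟨hn.1, hBA hn.2⟩
    have hnat : dcount (A \ B) x = dcount A x - dcount B x := by
      unfold dcount
      rw [← Finset.card_sdiff_of_subset hsub]
      congr 1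
      ext n
      simp only [Finset.mem_filter, Finset.mem_sdiff, Set.mem_diff]
      tauto
    rw [hnat, Nat.cast_sub]
    exact Finset.card_le_card hsub
  have h := hA.sub hB
  exact h.congr fun x => by rw [← sub_div, ← hkey x]

lemma hasDensity_univ : HasDensity Set.univ 1 := by
  rw [hasDensity_iff]
  have hkey : ∀ x, (dcount Set.univ x : ℝ) = x := by
    intro x
    have : dcount Set.univ x = x := by
      unfold dcount
      simp
    rw [this]
  have heq : ∀ᶠ x : ℕ in atTop, (dcount Set.univ x : ℝ) / x = 1 := by
    filter_upwards [eventually_ge_atTop 1] with x hx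
    rw [hkey x, div_self (Nat.cast_ne_zero.mpr (by omega))]
  rw [tendsto_congr' heq]
  exact tendsto_const_nhds

lemma hasDensity_empty : HasDensity ∅ 0 := by
  rw [hasDensity_iff]
  have hkey : ∀ x : ℕ, (dcount ∅ x : ℝ) = 0 := by
    intro x
    rw [dcount]
    simp
  simp only [hkey, zero_div]
  exact tendsto_const_nhds

-- count of {n ∈ [1,x] : q ∣ n + c}
lemma dcount_dvd_add (q c x : ℕ) :
    dcount {n : ℕ | q ∣ n + c} x = (x + c) / q - c / q := by
  have hbij : dcount {n : ℕ | q ∣ n + c} x = ((Finset.Ioc c (x + c)).filter fun m => q ∣ m).card := by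
    unfold dcount
    apply Finset.card_bij' (fun n _ => n + c) (fun m _ => m - c)
    · intro n hn
      simp only [Finset.mem_filter, Finset.mem_Icc] at hn
      simp only [Finset.mem_filter, Finset.mem_Ioc]
      exact ⟨⟨by omega, by omega⟩, hn.2⟩
    · intro m hm
      simp only [Finset.mem_filter, Finset.mem_Ioc] at hm
      simp only [Finset.mem_filter, Finset.mem_Icc, Set.mem_setOf_eq]
      have : m - c + c = m := by omega
      exact ⟨⟨by omega, by omega⟩, by rw [this]; exact hm.2⟩
    · intro n hn; omega
    · intro m hm
      simp only [Finset.mem_filter, Finset.mem_Ioc] at hm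
      omega
  rw [hbij]
  have hsplit : (Finset.Ioc 0 (x + c)).filter (fun m => q ∣ m) =
      ((Finset.Ioc 0 c).filter fun m => q ∣ m) ∪ ((Finset.Ioc c (x + c)).filter fun m => q ∣ m) := by
    rw [← Finset.filter_union, Finset.Ioc_union_Ioc_eq_Ioc (Nat.zero_le c) (Nat.le_add_left c x)]
  have hdisj : Disjoint ((Finset.Ioc 0 c).filter fun m => q ∣ m)
      ((Finset.Ioc c (x + c)).filter fun m => q ∣ m) := by
    rw [Finset.disjoint_left]
    intro n hn hn'
    simp only [Finset.mem_filter, Finset.mem_Ioc] at hn hn'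
    omega
  have h1 : ((Finset.Ioc 0 (x + c)).filter fun m => q ∣ m).card = (x + c) / q :=
    Nat.Ioc_filter_dvd_card_eq_div (x + c) q
  have h2 : ((Finset.Ioc 0 c).filter fun m => q ∣ m).card = c / q :=
    Nat.Ioc_filter_dvd_card_eq_div c q
  rw [hsplit, Finset.card_union_of_disjoint hdisj] at h1
  omega

-- count of {n ∈ [1,x] : c < n ∧ q ∣ n - c}
lemma dcount_dvd_sub (q c x : ℕ) :
    dcount {n : ℕ | c < n ∧ q ∣ n - c} x = (x - c) / q := by
  have hbij : dcount {n : ℕ | c < n ∧ q ∣ n - c} x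
      = ((Finset.Ioc 0 (x - c)).filter fun m => q ∣ m).card := by
    unfold dcount
    apply Finset.card_bij' (fun n _ => n - c) (fun m _ => m + c)
    · intro n hn
      simp only [Finset.mem_filter, Finset.mem_Icc] at hn
      simp only [Finset.mem_filter, Finset.mem_Ioc]
      obtain ⟨⟨h1, h2⟩, h3, h4⟩ := hn
      exact ⟨⟨by omega, by omega⟩, h4⟩
    · intro m hm
      simp only [Finset.mem_filter, Finset.mem_Ioc] at hm
      simp only [Finset.mem_filter, Finset.mem_Icc, Set.mem_setOf_eq]
      have : m + c - c = m := by omega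
      exact ⟨⟨by omega, by omega⟩, by omega, by rw [this]; exact hm.2⟩
    · intro n hn
      simp only [Finset.mem_filter, Set.mem_setOf_eq] at hn
      omega
    · intro m hm; omega
  rw [hbij, Nat.Ioc_filter_dvd_card_eq_div]

lemma hasDensity_dvd_add (q c : ℕ) (hq : 0 < q) : HasDensity {n : ℕ | q ∣ n + c} (1 / q) := by
  apply hasDensity_of_count hq (C := q + c)
  intro x
  rw [dcount_dvd_add q c x]
  have hle : c / q ≤ (x + c) / q := Nat.div_le_div_right (Nat.le_add_left c x)
  have h1 : (x + c) / q * q ≤ x + c := Nat.div_mul_le_self _ q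
  have h2 : x + c < ((x + c) / q + 1) * q := (Nat.div_lt_iff_lt_mul hq).mp (Nat.lt_succ_self _)
  have h3 : c / q * q ≤ c := Nat.div_mul_le_self _ q
  have h4 : c < (c / q + 1) * q := (Nat.div_lt_iff_lt_mul hq).mp (Nat.lt_succ_self _)
  constructor
  · zify [hle]
    zify at h1 h2 h3 h4
    nlinarith
  · zify [hle]
    zify at h1 h2 h3 h4
    nlinarith

lemma hasDensity_dvd_sub (q c : ℕ) (hq : 0 < q) :
    HasDensity {n : ℕ | c < n ∧ q ∣ n - c} (1 / q) := by
  apply hasDensity_of_count hq (C := q + c)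
  intro x
  rw [dcount_dvd_sub q c x]
  have h1 : (x - c) / q * q ≤ x - c := Nat.div_mul_le_self _ q
  have h2 : x - c < ((x - c) / q + 1) * q := (Nat.div_lt_iff_lt_mul hq).mp (Nat.lt_succ_self _)
  constructor
  · rcases le_or_gt c x with hcx | hcx
    · zify [hcx]
      zify [hcx] at h1 h2
      nlinarith
    · have : x - c = 0 := by omega
      omega
  · rw [mul_comm]
    exact le_trans (le_trans h1 (Nat.sub_le x c)) (Nat.le_add_right x (q + c))

lemma fact_eq_iff {p : ℕ} (hp : p.Prime) {N a : ℕ} (hN : N ≠ 0) :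
    N.factorization p = a ↔ p ^ a ∣ N ∧ ¬ p ^ (a + 1) ∣ N := by
  have h := fun k : ℕ => (Nat.Prime.pow_dvd_iff_le_factorization hp (n := N) (k := k) hN)
  rw [h a, h (a + 1)]
  omega

lemma hasDensity_fact_add {p : ℕ} (hp : p.Prime) (c a : ℕ) :
    HasDensity {n : ℕ | (n + c).factorization p = a} (1 / (p:ℝ)^a - 1 / (p:ℝ)^(a+1)) := by
  have hpa : 0 < p ^ a := pow_pos hp.pos a
  have hpa1 : 0 < p ^ (a + 1) := pow_pos hp.pos (a + 1)
  have h1 := hasDensity_dvd_add (p ^ a) c hpa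
  have h2 := hasDensity_dvd_add (p ^ (a + 1)) c hpa1
  have hsub : {n : ℕ | p ^ (a+1) ∣ n + c} ⊆ {n : ℕ | p ^ a ∣ n + c} := by
    intro n hn
    exact dvd_trans (pow_dvd_pow p (Nat.le_succ a)) hn
  have h3 := hasDensity_sdiff hsub h1 h2
  rw [Nat.cast_pow, Nat.cast_pow] at h3
  apply hasDensity_congr 1 _ h3
  intro n hn
  have hne : n + c ≠ 0 := by omega
  rw [Set.mem_diff]
  simp only [Set.mem_setOf_eq]
  rw [fact_eq_iff hp hne]

lemma hasDensity_fact_self {p : ℕ} (hp : p.Prime) (a : ℕ) :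
    HasDensity {n : ℕ | n.factorization p = a} (1 / (p:ℝ)^a - 1 / (p:ℝ)^(a+1)) := by
  apply hasDensity_congr 1 _ (hasDensity_fact_add hp 0 a)
  intro n _
  simp

lemma hasDensity_fact_sub {p : ℕ} (hp : p.Prime) (c : ℕ) {a : ℕ} (ha : 1 ≤ a) :
    HasDensity {n : ℕ | (n - c).factorization p = a} (1 / (p:ℝ)^a - 1 / (p:ℝ)^(a+1)) := by
  have hpa : 0 < p ^ a := pow_pos hp.pos a
  have hpa1 : 0 < p ^ (a + 1) := pow_pos hp.pos (a + 1)
  have h1 := hasDensity_dvd_sub (p ^ a) c hpa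
  have h2 := hasDensity_dvd_sub (p ^ (a + 1)) c hpa1
  have hsub : {n : ℕ | c < n ∧ p ^ (a+1) ∣ n - c} ⊆ {n : ℕ | c < n ∧ p ^ a ∣ n - c} := by
    intro n hn
    exact ⟨hn.1, dvd_trans (pow_dvd_pow p (Nat.le_succ a)) hn.2⟩
  have h3 := hasDensity_sdiff hsub h1 h2
  rw [Nat.cast_pow, Nat.cast_pow] at h3
  apply hasDensity_congr 0 _ h3
  intro n _
  rw [Set.mem_diff]
  simp only [Set.mem_setOf_eq]
  rcases le_or_gt n c with hnc | hnc
  · have : n - c = 0 := by omega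
    rw [this]
    simp only [Nat.factorization_zero, Finsupp.coe_zero, Pi.zero_apply]
    constructor
    · intro hab; exact absurd hab.1.1 (by omega)
    · intro hab; omega
  · have hne : n - c ≠ 0 := by omega
    rw [fact_eq_iff hp hne]
    tauto

lemma fact_pos_iff {p : ℕ} (hp : p.Prime) {N : ℕ} (hN : N ≠ 0) :
    1 ≤ N.factorization p ↔ p ∣ N := by
  rw [← Nat.Prime.pow_dvd_iff_le_factorization hp hN, pow_one]

lemma list_range_map_sum (m : ℕ) (g : ℕ → ℕ) :
    ((List.range m).map g).sum = ∑ i ∈ Finset.range m, g i := by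
  induction m with
  | zero => simp
  | succ m ih =>
    rw [List.range_succ, List.map_append, List.sum_append, Finset.sum_range_succ, ih]
    simp

lemma adt_card : ∀ (k a : ℕ), (Finset.Nat.antidiagonalTuple (k+1) a).card = (a + k).choose k := by
  intro k
  induction k with
  | zero =>
    intro a
    rw [Finset.Nat.antidiagonalTuple_one]
    simp
  | succ k ih =>
    intro a
    have hlen : ∀ (K n : ℕ), (Finset.Nat.antidiagonalTuple K n).card
        = (List.Nat.antidiagonalTuple K n).length := fun K n => rfl
    rw [hlen]
    have hunfold : List.Nat.antidiagonalTuple (k+1+1) a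
        = (List.Nat.antidiagonal a).flatMap fun ni =>
            (List.Nat.antidiagonalTuple (k+1) ni.2).map fun x => (Fin.cons ni.1 x : Fin (k+1+1) → ℕ) := rfl
    rw [hunfold, List.length_flatMap]
    have hanti : List.Nat.antidiagonal a = (List.range (a+1)).map fun i => (i, a - i) := rfl
    rw [hanti, List.map_map]
    have hsum : ((List.range (a+1)).map ((List.length ∘ fun ni : ℕ × ℕ =>
        (List.Nat.antidiagonalTuple (k+1) ni.2).map fun x => (Fin.cons ni.1 x : Fin (k+1+1) → ℕ)) ∘
        fun i => (i, a - i))).sum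
        = ∑ i ∈ Finset.range (a+1), (a - i + k).choose k := by
      rw [list_range_map_sum]
      apply Finset.sum_congr rfl
      intro i _
      simp only [Function.comp_apply, List.length_map]
      rw [← hlen, ih]
    refine hsum.trans ?_
    have hrefl : ∑ i ∈ Finset.range (a+1), (a - i + k).choose k
        = ∑ i ∈ Finset.range (a+1), (i + k).choose k := by
      rw [← Finset.sum_range_reflect (fun i => (i + k).choose k) (a+1)]
      apply Finset.sum_congr rfl
      intro j hj
      rw [Finset.mem_range] at hj
      congr 2
    rw [hrefl, Nat.sum_range_add_choose a k]
    congr 1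

lemma D_prime_pow {p : ℕ} (hp : p.Prime) (K a : ℕ) :
    D (K+1) (p ^ a) = (a + K).choose K := by
  rw [← adt_card K a]
  unfold D
  apply Finset.card_bij' (fun f _ => fun i => (f i).factorization p) (fun e _ => fun i => p ^ e i)
  · intro f hf
    simp only [Finset.mem_filter, Fintype.mem_piFinset, Finset.mem_Icc] at hf
    obtain ⟨hmem, hprod⟩ := hf
    choose b hba hbe using fun i =>
      (Nat.dvd_prime_pow hp).mp (hprod ▸ Finset.dvd_prod_of_mem f (Finset.mem_univ i))
    rw [Finset.Nat.mem_antidiagonalTuple]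
    have hfact : ∀ i, (f i).factorization p = b i := by
      intro i
      rw [hbe i, hp.factorization_pow]
      simp
    simp only [hfact]
    have hprod2 : ∏ i, p ^ b i = p ^ a := by
      rw [← hprod]
      exact Finset.prod_congr rfl fun i _ => (hbe i).symm
    rw [Finset.prod_pow_eq_pow_sum] at hprod2
    exact Nat.pow_right_injective hp.two_le hprod2
  · intro e he
    rw [Finset.Nat.mem_antidiagonalTuple] at he
    simp only [Finset.mem_filter, Fintype.mem_piFinset, Finset.mem_Icc]
    constructor
    · intro i
      refine ⟨Nat.one_le_iff_ne_zero.mpr (pow_ne_zero _ hp.pos.ne'), ?_⟩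
      apply Nat.pow_le_pow_right hp.pos
      exact he ▸ Finset.single_le_sum (f := e) (fun j _ => Nat.zero_le _) (Finset.mem_univ i)
    · rw [Finset.prod_pow_eq_pow_sum, he]
  · intro f hf
    simp only [Finset.mem_filter, Fintype.mem_piFinset, Finset.mem_Icc] at hf
    obtain ⟨hmem, hprod⟩ := hf
    funext i
    show p ^ ((f i).factorization p) = f i
    obtain ⟨b, hba, hbe⟩ :=
      (Nat.dvd_prime_pow hp).mp (hprod ▸ Finset.dvd_prod_of_mem f (Finset.mem_univ i))
    rw [hbe, hp.factorization_pow]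
    simp
  · intro e he
    funext i
    show ((p : ℕ) ^ e i).factorization p = e i
    rw [hp.factorization_pow]
    simp

lemma choose_add_strictMono {K : ℕ} (hK : 1 ≤ K) : StrictMono fun a : ℕ => (a + K).choose K := by
  apply strictMono_nat_of_lt_succ
  intro b
  obtain ⟨j, rfl⟩ : ∃ j, K = j + 1 := ⟨K - 1, by omega⟩
  rw [show b + 1 + (j+1) = (b + (j+1)) + 1 by omega, Nat.choose_succ_succ]
  have hpos : 0 < (b + (j+1)).choose j := Nat.choose_pos (by omega)
  simp only [Nat.succ_eq_add_one] at *
  omega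

lemma le_choose_add {K : ℕ} (hK : 1 ≤ K) : ∀ a : ℕ, a + 1 ≤ (a + K).choose K := by
  intro a
  induction a with
  | zero =>
    have := Nat.choose_pos (le_refl K)
    have h0 : 0 + K = K := Nat.zero_add K
    rw [h0]
    omega
  | succ a ih =>
    have := choose_add_strictMono hK (Nat.lt_succ_self a)
    simp only [Nat.succ_eq_add_one] at this
    show a + 1 + 1 ≤ (a + 1 + K).choose K
    omega

lemma hasSum_g {p : ℕ} (hp3 : 3 ≤ p) {K' : ℕ} (hK' : 1 ≤ K') :
    HasSum (fun v : ℕ => (v:ℝ) * ∑ a ∈ Finset.Icc 1 v,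
        (if (a + K').choose K' = v then (1/(p:ℝ)^a - 1/(p:ℝ)^(a+1)) else 0))
      ((1 - 1/(p:ℝ)) ^ (-(K' : ℤ)) - (1 - 1/(p:ℝ))) := by
  have hp0 : (0:ℝ) < p := by positivity
  have hp1 : (1:ℝ) < p := by exact_mod_cast (by omega : 1 < p)
  have hr : ‖(1/(p:ℝ))‖ < 1 := by
    rw [Real.norm_eq_abs, abs_of_pos (by positivity), div_lt_one hp0]
    exact hp1
  have hne : (1:ℝ) - 1/p ≠ 0 := by
    have : 1/(p:ℝ) < 1 := by rw [div_lt_one hp0]; exact hp1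
    linarith
  have hwa : ∀ a : ℕ, (1/(p:ℝ))^a * (1 - 1/p) = 1/(p:ℝ)^a - 1/(p:ℝ)^(a+1) := by
    intro a
    simp only [one_div_pow]
    rw [pow_succ]
    field_simp
  have S0 : HasSum (fun a : ℕ => ((a + K').choose K' : ℝ) * (1/p)^a)
      (1/(1 - 1/(p:ℝ))^(K'+1)) := hasSum_choose_mul_geometric_of_norm_lt_one K' hr
  have S1 := S0.mul_right (1 - 1/(p:ℝ))
  have hval : 1/(1 - 1/(p:ℝ))^(K'+1) * (1 - 1/(p:ℝ)) = (1 - 1/(p:ℝ)) ^ (-(K' : ℤ)) := by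
    rw [zpow_neg, zpow_natCast, pow_succ, one_div, mul_inv_rev, mul_assoc,
      mul_comm (((1 - 1/(p:ℝ))^K')⁻¹), ← mul_assoc, inv_mul_cancel₀ hne, one_mul]
  have hfun : (fun a : ℕ => ((a + K').choose K' : ℝ) * (1/p)^a * (1 - 1/p))
      = fun a : ℕ => ((a + K').choose K' : ℝ) * (1/(p:ℝ)^a - 1/(p:ℝ)^(a+1)) := by
    funext a
    rw [mul_assoc, hwa]
  have S2 : HasSum (fun a : ℕ => ((a + K').choose K' : ℝ) * (1/(p:ℝ)^a - 1/(p:ℝ)^(a+1)))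
      ((1 - 1/(p:ℝ)) ^ (-(K' : ℤ))) := by
    rw [← hval, ← hfun]
    exact S1
  have hF0 : ((0 + K').choose K' : ℝ) * (1/(p:ℝ)^0 - 1/(p:ℝ)^(0+1)) = 1 - 1/(p:ℝ) := by
    rw [Nat.zero_add, Nat.choose_self]
    norm_num
  have S3 : HasSum (fun a : ℕ => ((a + 1 + K').choose K' : ℝ) * (1/(p:ℝ)^(a+1) - 1/(p:ℝ)^(a+1+1)))
      ((1 - 1/(p:ℝ)) ^ (-(K' : ℤ)) - (1 - 1/(p:ℝ))) := by
    have := (hasSum_nat_add_iff (f := fun a : ℕ => ((a + K').choose K' : ℝ)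
      * (1/(p:ℝ)^a - 1/(p:ℝ)^(a+1))) 1
      (g := (1 - 1/(p:ℝ)) ^ (-(K' : ℤ)) - (1 - 1/(p:ℝ)))).mpr
    simp only [Finset.sum_range_one, hF0] at this
    have h2 := this (by rw [sub_add_cancel]; exact S2)
    exact h2
  -- transfer along the injective map e
  have hmono : StrictMono (fun a : ℕ => (a + 1 + K').choose K') :=
    fun a b hab => choose_add_strictMono hK' (show a + 1 < b + 1 by omega)
  apply (Function.Injective.hasSum_iff hmono.injective ?_).mp ?_
  · intro v hv
    have hzero : ∑ a ∈ Finset.Icc 1 v,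
        (if (a + K').choose K' = v then (1/(p:ℝ)^a - 1/(p:ℝ)^(a+1)) else 0) = 0 := by
      apply Finset.sum_eq_zero
      intro b hb
      rw [Finset.mem_Icc] at hb
      rw [if_neg]
      intro hbv
      apply hv
      refine ⟨b - 1, ?_⟩
      simpa only [show b - 1 + 1 = b by omega] using hbv
    rw [hzero, mul_zero]
  · have hcomp : ((fun v : ℕ => (v:ℝ) * ∑ a ∈ Finset.Icc 1 v,
        (if (a + K').choose K' = v then (1/(p:ℝ)^a - 1/(p:ℝ)^(a+1)) else 0))
        ∘ (fun a : ℕ => (a + 1 + K').choose K'))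
        = fun a : ℕ => ((a + 1 + K').choose K' : ℝ) * (1/(p:ℝ)^(a+1) - 1/(p:ℝ)^(a+1+1)) := by
      funext a
      simp only [Function.comp_apply]
      congr 1
      have hmem : a + 1 ∈ Finset.Icc 1 ((a + 1 + K').choose K') := by
        rw [Finset.mem_Icc]
        exact ⟨by omega, by have := le_choose_add hK' (a+1); omega⟩
      rw [Finset.sum_eq_single_of_mem (a+1) hmem]
      · rw [if_pos rfl]
      · intro b hb hbne
        rw [if_neg]
        intro hcontra
        exact hbne ((choose_add_strictMono hK').injective hcontra)
    rw [hcomp]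
    exact S3

/-- density of the level-set piece coming from one of the three factors -/
lemma hasDensity_S {K' : ℕ} (hK' : 1 ≤ K') {φ : ℕ → ℕ} {w : ℕ → ℝ}
    (hφ : ∀ a, 1 ≤ a → HasDensity {n : ℕ | φ n = a} (w a)) (v : ℕ) :
    HasDensity {n : ℕ | 1 ≤ φ n ∧ (φ n + K').choose K' = v}
      (∑ a ∈ Finset.Icc 1 v, if (a + K').choose K' = v then w a else 0) := by
  by_cases hex : ∃ a, 1 ≤ a ∧ (a + K').choose K' = v
  · obtain ⟨a0, ha1, ha2⟩ := hex
    have hinj := (choose_add_strictMono hK').injective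
    have hseteq : {n : ℕ | 1 ≤ φ n ∧ (φ n + K').choose K' = v} = {n : ℕ | φ n = a0} := by
      ext n
      simp only [Set.mem_setOf_eq]
      constructor
      · intro ⟨h1, h2⟩
        exact hinj (h2.trans ha2.symm)
      · intro h1
        rw [h1]
        exact ⟨ha1, ha2⟩
    have hval : (∑ a ∈ Finset.Icc 1 v, if (a + K').choose K' = v then w a else 0) = w a0 := by
      have hmem : a0 ∈ Finset.Icc 1 v := by
        rw [Finset.mem_Icc]
        have := le_choose_add hK' a0
        omega
      rw [Finset.sum_eq_single_of_mem a0 hmem]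
      · rw [if_pos ha2]
      · intro b hb hbne
        rw [if_neg]
        intro hcontra
        exact hbne (hinj (hcontra.trans ha2.symm))
    rw [hseteq, hval]
    exact hφ a0 ha1
  · have hseteq : {n : ℕ | 1 ≤ φ n ∧ (φ n + K').choose K' = v} = ∅ := by
      ext n
      simp only [Set.mem_setOf_eq, Set.mem_empty_iff_false, iff_false]
      intro ⟨h1, h2⟩
      exact hex ⟨φ n, h1, h2⟩
    have hval : (∑ a ∈ Finset.Icc 1 v, if (a + K').choose K' = v then w a else 0) = 0 := by
      apply Finset.sum_eq_zero
      intro b hb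
      rw [Finset.mem_Icc] at hb
      rw [if_neg]
      intro hcontra
      exact hex ⟨b, hb.1, hcontra⟩
    rw [hseteq, hval]
    exact hasDensity_empty

theorem expectation_triple_coprime_case (k l m : ℕ) (hk : 2 ≤ k) (hl : 2 ≤ l) (hm : 2 ≤ m)
    (h : ℕ) (hh : 0 < h) (p : ℕ) (hp : p.Prime) (hodd : Odd p) (hph : ¬ p ∣ h) :
    HasExpectation
      (fun n : ℕ =>
        D k (p ^ ((n + h).factorization p)) * D l (p ^ (n.factorization p)) *
          D m (p ^ ((n - h).factorization p)))
      ((1 - 1 / p) ^ (1 - (k : ℤ)) + (1 - 1 / p) ^ (1 - (l : ℤ))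
        + (1 - 1 / p) ^ (1 - (m : ℤ)) - 2) := by
  obtain ⟨K', rfl⟩ : ∃ K', k = K' + 1 := ⟨k - 1, by omega⟩
  obtain ⟨L', rfl⟩ : ∃ L', l = L' + 1 := ⟨l - 1, by omega⟩
  obtain ⟨M', rfl⟩ : ∃ M', m = M' + 1 := ⟨m - 1, by omega⟩
  have hK' : 1 ≤ K' := by omega
  have hL' : 1 ≤ L' := by omega
  have hM' : 1 ≤ M' := by omega
  have hp2 : p ≠ 2 := by
    intro h2
    rw [h2, Nat.odd_iff] at hodd
    omega
  have hp3 : 3 ≤ p := by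
    have := hp.two_le
    rcases Nat.lt_or_ge p 3 with hlt | hge
    · interval_cases p <;> simp_all
    · exact hge
  -- pairwise: at most one positive
  have hpolarize : ∀ {N : ℕ}, 1 ≤ N.factorization p → p ∣ N ∧ N ≠ 0 := by
    intro N hN
    have hne : N ≠ 0 := by
      intro h0
      rw [h0] at hN
      simp at hN
    exact ⟨(fact_pos_iff hp hne).mp hN, hne⟩
  have hn2 : ¬ p ∣ 2 * h := by
    intro hd
    rcases (Nat.Prime.dvd_mul hp).mp hd with h2 | hh'
    · have := Nat.le_of_dvd (by norm_num) h2
      omega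
    · exact hph hh'
  have hAB : ∀ n : ℕ, (n + h).factorization p = 0 ∨ n.factorization p = 0 := by
    intro n
    by_contra hc
    push_neg at hc
    obtain ⟨h1, h2⟩ := hc
    obtain ⟨d1, _⟩ := hpolarize (by omega : 1 ≤ (n + h).factorization p)
    obtain ⟨d2, _⟩ := hpolarize (by omega : 1 ≤ n.factorization p)
    exact hph (by simpa [Nat.add_sub_cancel_left] using Nat.dvd_sub d1 d2)
  have hAG : ∀ n : ℕ, (n + h).factorization p = 0 ∨ (n - h).factorization p = 0 := by
    intro n
    by_contra hc
    push_neg at hc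
    obtain ⟨h1, h2⟩ := hc
    obtain ⟨d1, _⟩ := hpolarize (by omega : 1 ≤ (n + h).factorization p)
    obtain ⟨d2, hne2⟩ := hpolarize (by omega : 1 ≤ (n - h).factorization p)
    have hnh : h < n := by
      by_contra hcon
      exact hne2 (by omega)
    have : (n + h) - (n - h) = 2 * h := by omega
    exact hn2 (this ▸ Nat.dvd_sub d1 d2)
  have hBG : ∀ n : ℕ, n.factorization p = 0 ∨ (n - h).factorization p = 0 := by
    intro n
    by_contra hc
    push_neg at hc
    obtain ⟨h1, h2⟩ := hc
    obtain ⟨d1, _⟩ := hpolarize (by omega : 1 ≤ n.factorization p)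
    obtain ⟨d2, hne2⟩ := hpolarize (by omega : 1 ≤ (n - h).factorization p)
    have hnh : h < n := by
      by_contra hcon
      exact hne2 (by omega)
    have : n - (n - h) = h := by omega
    exact hph (this ▸ Nat.dvd_sub d1 d2)
  -- D-values
  have hDK : ∀ n : ℕ, D (K'+1) (p ^ (n + h).factorization p) = ((n + h).factorization p + K').choose K' := fun n => D_prime_pow hp K' ((n + h).factorization p)
  have hDL : ∀ n : ℕ, D (L'+1) (p ^ n.factorization p) = (n.factorization p + L').choose L' := fun n => D_prime_pow hp L' (n.factorization p)
  have hDM : ∀ n : ℕ, D (M'+1) (p ^ (n - h).factorization p) = ((n - h).factorization p + M').choose M' := fun n => D_prime_pow hp M' ((n - h).factorization p)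
  -- the density function
  set w : ℕ → ℝ := fun a => 1/(p:ℝ)^a - 1/(p:ℝ)^(a+1) with hw
  set gK : ℕ → ℝ := fun v => ∑ a ∈ Finset.Icc 1 v,
    (if (a + K').choose K' = v then w a else 0) with hgK
  set gL : ℕ → ℝ := fun v => ∑ a ∈ Finset.Icc 1 v,
    (if (a + L').choose L' = v then w a else 0) with hgL
  set gM : ℕ → ℝ := fun v => ∑ a ∈ Finset.Icc 1 v,
    (if (a + M').choose M' = v then w a else 0) with hgM
  refine ⟨fun v => (if v = 1 then (1 - 3/(p:ℝ)) else 0) + gK v + gL v + gM v,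
    fun v => ?_, ?_⟩
  · -- level-set density
    -- set identity
    have key : {n : ℕ | D (K'+1) (p ^ ((n + h).factorization p)) * D (L'+1) (p ^ (n.factorization p)) *
          D (M'+1) (p ^ ((n - h).factorization p)) = v}
        = (({n : ℕ | v = 1 ∧ ((n + h).factorization p = 0 ∧ n.factorization p = 0 ∧ (n - h).factorization p = 0)}
          ∪ {n : ℕ | 1 ≤ (n + h).factorization p ∧ ((n + h).factorization p + K').choose K' = v})
          ∪ {n : ℕ | 1 ≤ n.factorization p ∧ (n.factorization p + L').choose L' = v})
          ∪ {n : ℕ | 1 ≤ (n - h).factorization p ∧ ((n - h).factorization p + M').choose M' = v} := by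
      ext n
      simp only [Set.mem_setOf_eq, Set.mem_union]
      rw [hDK n, hDL n, hDM n]
      have cK := le_choose_add hK' ((n + h).factorization p)
      have cL := le_choose_add hL' (n.factorization p)
      have cM := le_choose_add hM' ((n - h).factorization p)
      have hab := hAB n
      have hag := hAG n
      have hbg := hBG n
      clear hAB hAG hBG hDK hDL hDM
      rcases Nat.eq_zero_or_pos ((n + h).factorization p) with hA | hA <;>
        rcases Nat.eq_zero_or_pos (n.factorization p) with hB | hB <;>
        rcases Nat.eq_zero_or_pos ((n - h).factorization p) with hC | hC <;>
        simp_all only [Nat.zero_add, Nat.choose_self, one_mul, mul_one, true_and, and_true,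
          or_true, true_or, or_false, false_or, false_and, and_false, eq_self_iff_true,
          Nat.le_zero, one_ne_zero, Nat.lt_irrefl, not_false_iff] <;>
        try omega
    rw [key]
    -- densities of the four pieces
    have hE0 : HasDensity {n : ℕ | v = 1 ∧ ((n + h).factorization p = 0 ∧ n.factorization p = 0 ∧ (n - h).factorization p = 0)}
        (if v = 1 then (1 - 3/(p:ℝ)) else 0) := by
      by_cases hv : v = 1
      · rw [if_pos hv]
        have hU1 : HasDensity {n : ℕ | 1 ≤ (n + h).factorization p} (1/(p:ℝ)) := by
          apply hasDensity_congr 0 _ (hasDensity_dvd_add p h hp.pos)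
          intro n _
          simp only [Set.mem_setOf_eq]
          rw [fact_pos_iff hp (by omega : n + h ≠ 0)]
        have hU2 : HasDensity {n : ℕ | 1 ≤ n.factorization p} (1/(p:ℝ)) := by
          apply hasDensity_congr 1 _ (hasDensity_dvd_add p 0 hp.pos)
          intro n hn
          simp only [Set.mem_setOf_eq, Nat.add_zero]
          rw [fact_pos_iff hp (by omega : n ≠ 0)]
        have hU3 : HasDensity {n : ℕ | 1 ≤ (n - h).factorization p} (1/(p:ℝ)) := by
          apply hasDensity_congr 0 _ (hasDensity_dvd_sub p h hp.pos)
          intro n _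
          simp only [Set.mem_setOf_eq]
          constructor
          · intro ⟨hn, hd⟩
            rw [fact_pos_iff hp (by omega : n - h ≠ 0)]
            exact hd
          · intro h1
            obtain ⟨hd, hne⟩ := hpolarize h1
            exact ⟨by omega, hd⟩
        have hU12 := hasDensity_union (fun n hn hn' => by
          rcases hAB n with h0 | h0
          · simp only [Set.mem_setOf_eq] at hn; omega
          · simp only [Set.mem_setOf_eq] at hn'; omega) hU1 hU2
        have hU123 := hasDensity_union (fun n hn hn' => by
          simp only [Set.mem_union, Set.mem_setOf_eq] at hn hn'
          rcases hn with h0 | h0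
          · rcases hAG n with h4 | h4 <;> omega
          · rcases hBG n with h4 | h4 <;> omega) hU12 hU3
        have hdiff := hasDensity_sdiff (Set.subset_univ _) hasDensity_univ hU123
        have hfinal := hasDensity_congr 0 (B := {n : ℕ | (n + h).factorization p = 0 ∧ n.factorization p = 0 ∧ (n - h).factorization p = 0}) (fun n _ => by
          simp only [Set.mem_diff, Set.mem_univ, Set.mem_union, Set.mem_setOf_eq, true_and]
          omega) hdiff
        have hval : (1 : ℝ) - (1/(p:ℝ) + 1/(p:ℝ) + 1/(p:ℝ)) = 1 - 3/(p:ℝ) := by ring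
        rw [hval] at hfinal
        apply hasDensity_congr 0 _ hfinal
        intro n _
        simp only [Set.mem_setOf_eq]
        tauto
      · rw [if_neg hv]
        have : {n : ℕ | v = 1 ∧ ((n + h).factorization p = 0 ∧ n.factorization p = 0 ∧ (n - h).factorization p = 0)} = ∅ := by
          ext n
          simp [hv]
        rw [this]
        exact hasDensity_empty
    have hSA : HasDensity {n : ℕ | 1 ≤ (n + h).factorization p ∧ ((n + h).factorization p + K').choose K' = v} (gK v) := by
      apply hasDensity_S hK' (w := w) (fun a ha => ?_) v
      exact hasDensity_fact_add hp h a
    have hSB : HasDensity {n : ℕ | 1 ≤ n.factorization p ∧ (n.factorization p + L').choose L' = v} (gL v) := by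
      apply hasDensity_S hL' (w := w) (fun a ha => ?_) v
      exact hasDensity_fact_self hp a
    have hSC : HasDensity {n : ℕ | 1 ≤ (n - h).factorization p ∧ ((n - h).factorization p + M').choose M' = v} (gM v) := by
      apply hasDensity_S hM' (w := w) (fun a ha => ?_) v
      exact hasDensity_fact_sub hp h ha
    -- disjoint unions
    have hu1 := hasDensity_union (fun n hn hn' => by
      simp only [Set.mem_setOf_eq] at hn hn'
      omega) hE0 hSA
    have hu2 := hasDensity_union (fun n hn hn' => by
      simp only [Set.mem_union, Set.mem_setOf_eq] at hn hn'
      rcases hn with h0 | h0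
      · omega
      · rcases hAB n with h4 | h4 <;> omega) hu1 hSB
    have hu3 := hasDensity_union (fun n hn hn' => by
      simp only [Set.mem_union, Set.mem_setOf_eq] at hn hn'
      rcases hn with (h0 | h0) | h0
      · omega
      · rcases hAG n with h4 | h4 <;> omega
      · rcases hBG n with h4 | h4 <;> omega) hu2 hSC
    exact hu3
  · -- the expectation sum
    have H0 : HasSum (fun v : ℕ => (v:ℝ) * (if v = 1 then (1 - 3/(p:ℝ)) else 0))
        (1 - 3/(p:ℝ)) := by
      have hfe : (fun v : ℕ => (v:ℝ) * (if v = 1 then (1 - 3/(p:ℝ)) else 0))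
          = fun v : ℕ => (if v = 1 then (1 - 3/(p:ℝ)) else 0) := by
        funext u
        by_cases hu : u = 1
        · rw [hu]
          simp
        · simp [hu]
      rw [hfe]
      exact hasSum_ite_eq 1 _
    have HK := hasSum_g hp3 hK'
    have HL := hasSum_g hp3 hL'
    have HM := hasSum_g hp3 hM'
    have total := ((H0.add HK).add HL).add HM
    have hfe2 : (fun v : ℕ => ((v:ℝ) * (if v = 1 then (1 - 3/(p:ℝ)) else 0)
          + (v:ℝ) * ∑ a ∈ Finset.Icc 1 v, (if (a + K').choose K' = v then (1/(p:ℝ)^a - 1/(p:ℝ)^(a+1)) else 0))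
          + (v:ℝ) * ∑ a ∈ Finset.Icc 1 v, (if (a + L').choose L' = v then (1/(p:ℝ)^a - 1/(p:ℝ)^(a+1)) else 0)
          + (v:ℝ) * ∑ a ∈ Finset.Icc 1 v, (if (a + M').choose M' = v then (1/(p:ℝ)^a - 1/(p:ℝ)^(a+1)) else 0))
        = fun v : ℕ => (v:ℝ) * ((if v = 1 then (1 - 3/(p:ℝ)) else 0) + gK v + gL v + gM v) := by
      funext u
      rw [hgK, hgL, hgM, hw]
      simp only
      ring
    rw [hfe2] at total
    have hzp : ∀ J : ℕ, (1 : ℤ) - ((J + 1 : ℕ) : ℤ) = -(J : ℤ) := by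
      intro J
      push_cast
      ring
    rw [hzp K', hzp L', hzp M']
    have hval : (1 - 3/(p:ℝ)) + ((1 - 1/(p:ℝ)) ^ (-(K' : ℤ)) - (1 - 1/(p:ℝ)))
        + ((1 - 1/(p:ℝ)) ^ (-(L' : ℤ)) - (1 - 1/(p:ℝ)))
        + ((1 - 1/(p:ℝ)) ^ (-(M' : ℤ)) - (1 - 1/(p:ℝ)))
        = (1 - 1/(p:ℝ)) ^ (-(K' : ℤ)) + (1 - 1/(p:ℝ)) ^ (-(L' : ℤ))
          + (1 - 1/(p:ℝ)) ^ (-(M' : ℤ)) - 2 := by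
      ring
    rw [hval] at total
    exact total
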